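/- Let {x_{i_r}, x_{i_s}} (r < s) be a deletion pair in a word of a Coxeter group, meaning x_{i_r}⋯x_{i_s} is not reduced but both words obtained by deleting one endpoint are reduced. Then for any u with r < u < s, the word x_{i_r}⋯x̂_{i_u}⋯x_{i_s} obtained by deleting the interior letter x_{i_u} is not reduced. -/

import Mathlib

set_option linter.unusedSectionVars false

open List

namespace CoxDeletion

variable {W : Type*} [Group W]

/-- Conjugation action of `W` on sign functions `W → ℤˣ`. -/
def conjAut (a : W) : MulAut (W → ℤˣ) where
  toFun f := fun x => f (a⁻¹ * x * a)
  invFun f := fun x => f (a * x * a⁻¹)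
  left_inv f := by
    funext x
    have : a⁻¹ * (a * x * a⁻¹) * a = x := by group
    simp [this]
  right_inv f := by
    funext x
    have : a * (a⁻¹ * x * a) * a⁻¹ = x := by group
    simp [this]
  map_mul' f g := rfl

@[simp] lemma conjAut_apply (a : W) (f : W → ℤˣ) (x : W) :
    conjAut a f x = f (a⁻¹ * x * a) := rfl

/-- The conjugation action as a homomorphism `W →* MulAut (W → ℤˣ)`. -/
def conjHom : W →* MulAut (W → ℤˣ) where
  toFun := conjAut
  map_one' := by
    apply MulEquiv.ext; intro f; funext x; simp [conjAut]
  map_mul' a b := by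
    apply MulEquiv.ext; intro f; funext x
    simp [conjAut, mul_assoc]


variable {B : Type*} {M : CoxeterMatrix B} (cs : CoxeterSystem M W)

local prefix:100 "s" => cs.simple
local prefix:100 "π" => cs.wordProd
local prefix:100 "ℓ" => cs.length
local prefix:100 "lis" => cs.leftInvSeq

lemma leftInvSeq_cons (i : B) (ω : List B) :
    lis (i :: ω) = s i :: List.map (MulAut.conj (s i)) (lis ω) := rfl

variable [DecidableEq W]

/-- The lifted generators in `(W → ℤˣ) ⋊ W`. -/
def delta (i : B) : (W → ℤˣ) ⋊[conjHom] W :=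
  ⟨fun x => if x = s i then -1 else 1, s i⟩

@[simp] lemma delta_left (i : B) (x : W) :
    (delta cs i).left x = if x = s i then -1 else 1 := rfl

@[simp] lemma delta_right (i : B) : (delta cs i).right = s i := rfl

lemma prod_map_delta (ω : List B) :
    (ω.map (delta cs)).prod =
      ⟨fun x => (-1) ^ ((lis ω).count x), π ω⟩ := by
  induction ω with
  | nil =>
      apply SemidirectProduct.ext
      · funext x
        simp [CoxeterSystem.leftInvSeq]
      · simp [CoxeterSystem.wordProd]
  | cons i ω ih =>
      rw [List.map_cons, List.prod_cons, ih]
      apply SemidirectProduct.ext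
      · funext x
        have hx : x = MulAut.conj (s i) (s i * x * s i) := by
          simp [MulAut.conj_apply, cs.inv_simple, mul_assoc,
            cs.simple_mul_simple_cancel_left, cs.simple_mul_simple_cancel_right]
        have hcount : List.count x (List.map (⇑(MulAut.conj (s i))) (lis ω))
            = List.count (s i * x * s i) (lis ω) := by
          conv_lhs => rw [hx]
          exact List.count_map_of_injective _ _ (MulAut.conj (s i)).injective _
        rw [SemidirectProduct.mul_left, leftInvSeq_cons]
        show (delta cs i).left x *
            (conjHom (delta cs i).right (fun x => (-1) ^ ((lis ω).count x))) x
            = (-1) ^ (List.count x (s i :: List.map (⇑(MulAut.conj (s i))) (lis ω)))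
        rw [List.count_cons, hcount]
        simp only [delta_left, delta_right, conjHom, MonoidHom.coe_mk, OneHom.coe_mk,
          conjAut_apply, cs.inv_simple, pow_add]
        rcases eq_or_ne x (s i) with h | h
        · subst h
          rw [if_pos rfl, if_pos (by simp), pow_one]
          exact mul_comm _ _
        · have h' : ¬ (s i == x) = true := by
            simp only [beq_iff_eq]
            exact fun hh => h hh.symm
          rw [if_neg h, one_mul, if_neg h', pow_zero, mul_one]
      · rw [SemidirectProduct.mul_right]
        show s i * π ω = π (i :: ω)
        rw [cs.wordProd_cons]


open CoxeterSystem

lemma conj_pi_alt (a b : B) (k : ℕ) :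
    MulAut.conj (s a) (π (alternatingWord a b (2*k+1)))
      = π (alternatingWord b a (2*(k+1)+1)) := by
  have h2 : alternatingWord b a (2*k+2) = (alternatingWord a b (2*k+1)).concat a :=
    alternatingWord_succ b a (2*k+1)
  have h3 : alternatingWord b a (2*(k+1)+1) = a :: alternatingWord b a (2*k+2) := by
    rw [show 2*(k+1)+1 = (2*k+2)+1 from by ring, alternatingWord_succ']
    rw [if_pos ⟨k+1, by ring⟩]
  rw [h3, cs.wordProd_cons, h2, cs.wordProd_concat]
  simp [MulAut.conj_apply, cs.inv_simple, mul_assoc]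

lemma lis_alternatingWord (n : ℕ) (i j : B) :
    lis (alternatingWord i j n) =
      (List.range n).map (fun k =>
        π (alternatingWord (if Even n then j else i) (if Even n then i else j) (2*k+1))) := by
  induction n generalizing i j with
  | zero => simp [CoxeterSystem.alternatingWord]
  | succ n ih =>
      rw [alternatingWord_succ', leftInvSeq_cons, ih, List.range_succ_eq_map,
        List.map_cons, List.map_map, List.map_map]
      rcases Nat.even_or_odd n with hn | hn
      · rw [if_pos hn, if_pos hn, if_neg (fun h => (Nat.even_add_one.mp h) hn),
          if_neg (fun h => (Nat.even_add_one.mp h) hn)]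
        congr 1
        · have h1 : alternatingWord i j 1 = [j] := by
            rw [alternatingWord_succ']
            simp [CoxeterSystem.alternatingWord]
          rw [h1, cs.wordProd_singleton]
        · apply List.map_congr_left
          intro k _
          show MulAut.conj (s j) (π (alternatingWord j i (2*k+1)))
              = π (alternatingWord i j (2*(Nat.succ k)+1))
          exact conj_pi_alt cs j i k
      · have hne : ¬ Even n := Nat.not_even_iff_odd.mpr hn
        rw [if_neg hne, if_neg hne, if_pos (Nat.even_add_one.mpr hne),
          if_pos (Nat.even_add_one.mpr hne)]
        congr 1
        · have h1 : alternatingWord j i 1 = [i] := by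
            rw [alternatingWord_succ']
            simp [CoxeterSystem.alternatingWord]
          rw [h1, cs.wordProd_singleton]
        · apply List.map_congr_left
          intro k _
          show MulAut.conj (s i) (π (alternatingWord i j (2*k+1)))
              = π (alternatingWord j i (2*(Nat.succ k)+1))
          exact conj_pi_alt cs i j k


lemma alternatingWord_two_mul_succ (i j : B) (m : ℕ) :
    alternatingWord i j (2*(m+1)) = i :: j :: alternatingWord i j (2*m) := by
  have h1 : Even (2*m) := ⟨m, by ring⟩
  rw [show 2*(m+1) = (2*m+1)+1 from by ring, alternatingWord_succ',
    if_neg (by simp only [Nat.even_iff]; omega),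
    alternatingWord_succ', if_pos h1]

lemma prod_map_delta_alt (i j : B) (m : ℕ) :
    ((alternatingWord i j (2*m)).map (delta cs)).prod = (delta cs i * delta cs j)^m := by
  induction m with
  | zero => simp [CoxeterSystem.alternatingWord]
  | succ m ih =>
      rw [alternatingWord_two_mul_succ, List.map_cons, List.map_cons, List.prod_cons,
        List.prod_cons, ih, pow_succ' (delta cs i * delta cs j) m, mul_assoc]

lemma count_lis_alt_even (i j : B) (x : W) :
    Even ((lis (alternatingWord i j (2 * M i j))).count x) := by
  rw [lis_alternatingWord]
  have hEven : Even (2 * M i j) := ⟨M i j, by ring⟩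
  simp only [if_pos hEven]
  set m := M i j with hm
  have hg : ∀ k, π (alternatingWord j i (2*(m+k)+1)) = π (alternatingWord j i (2*k+1)) := by
    intro k
    rw [cs.prod_alternatingWord_eq_mul_pow, cs.prod_alternatingWord_eq_mul_pow]
    rw [if_neg (by simp only [Nat.even_iff]; omega),
      if_neg (by simp only [Nat.even_iff]; omega)]
    have e1 : (2*(m+k)+1)/2 = m + k := by omega
    have e2 : (2*k+1)/2 = k := by omega
    rw [e1, e2, add_comm m k, pow_add]
    rw [hm, cs.simple_mul_simple_pow' i j, mul_one]
  have hrange : List.range (2*m) = List.range m ++ List.map (fun x => m + x) (List.range m) := by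
    rw [two_mul, List.range_add]
  rw [hrange, List.map_append]
  have : (List.map (fun k => π (alternatingWord j i (2*k+1)))
        (List.map (fun x => m + x) (List.range m)))
      = List.map (fun k => π (alternatingWord j i (2*k+1))) (List.range m) := by
    rw [List.map_map]
    apply List.map_congr_left
    intro k _
    exact hg k
  rw [this, List.count_append]
  exact ⟨_, rfl⟩

lemma liftable : M.IsLiftable (delta cs) := by
  intro i j
  rw [← prod_map_delta_alt, prod_map_delta]
  apply SemidirectProduct.ext
  · funext x
    rw [SemidirectProduct.one_left]
    exact (count_lis_alt_even cs i j x).neg_one_pow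
  · rw [SemidirectProduct.one_right, cs.prod_alternatingWord_eq_mul_pow,
      if_pos ⟨M i j, by ring⟩, one_mul,
      show 2 * M i j / 2 = M i j from by omega, cs.simple_mul_simple_pow]

/-- The sign homomorphism recording the parities of reflection counts in
inversion sequences. -/
def sgn : W →* ((W → ℤˣ) ⋊[conjHom] W) := cs.lift ⟨delta cs, liftable cs⟩

lemma sgn_wordProd (ω : List B) : sgn cs (π ω) = (ω.map (delta cs)).prod := by
  have h : π ω = (ω.map cs.simple).prod := rfl
  rw [h, MonoidHom.map_list_prod, List.map_map]
  congr 1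
  apply List.map_congr_left
  intro a _
  show (sgn cs) (s a) = delta cs a
  exact cs.lift_apply_simple (liftable cs) a

/-- Key invariance: the parity of the number of occurrences of any element in the
left inversion sequence depends only on the product of the word. -/
lemma count_lis_parity {ω₁ ω₂ : List B} (h : π ω₁ = π ω₂) (x : W) :
    (lis ω₁).count x % 2 = (lis ω₂).count x % 2 := by
  have h2 := congrArg (sgn cs) h
  rw [sgn_wordProd, sgn_wordProd, prod_map_delta, prod_map_delta] at h2
  have h3 : (fun y => (-1:ℤˣ)^((lis ω₁).count y)) = fun y => (-1:ℤˣ)^((lis ω₂).count y) :=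
    congrArg SemidirectProduct.left h2
  have h4 := congrFun h3 x
  rcases Nat.even_or_odd ((lis ω₁).count x) with h1 | h1 <;>
    rcases Nat.even_or_odd ((lis ω₂).count x) with h5 | h5
  · rw [Nat.even_iff.mp h1, Nat.even_iff.mp h5]
  · exfalso
    rw [h1.neg_one_pow, h5.neg_one_pow] at h4
    exact absurd h4 (by decide)
  · exfalso
    rw [h1.neg_one_pow, h5.neg_one_pow] at h4
    exact absurd h4 (by decide)
  · rw [Nat.odd_iff.mp h1, Nat.odd_iff.mp h5]

/-- If the left inversion sequence of a word has no duplicates, the word is reduced. -/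
lemma isReduced_of_nodup_lis {ω : List B} (h : (lis ω).Nodup) : cs.IsReduced ω := by
  obtain ⟨ρ, hρred, hπ⟩ := cs.exists_reduced_word' (π ω)
  have hcnt : ∀ x, (lis ω).count x = (lis ρ).count x := by
    intro x
    have h1 := count_lis_parity cs hπ x
    have h2 := List.nodup_iff_count_le_one.mp h x
    have h3 := List.nodup_iff_count_le_one.mp (hρred.nodup_leftInvSeq) x
    omega
  have hperm : lis ω ~ lis ρ := List.perm_iff_count.mpr hcnt
  have hlen := hperm.length_eq
  rw [cs.length_leftInvSeq, cs.length_leftInvSeq] at hlen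
  show ℓ (π ω) = ω.length
  rw [hπ, hρred, hlen]

end CoxDeletion

open CoxDeletion List

/-- Let the first and last letters of the word `ω` form a deletion pair:
`ω` is not reduced, but deleting either the first or the last letter yields a reduced word.
Then for any interior position `u` (so `0 < u < ω.length - 1`), the word obtained by
deleting the letter at position `u` is not reduced. -/
theorem eraseIdx_interior_not_reduced {B W : Type*} [Group W] {M : CoxeterMatrix B}
    (cs : CoxeterSystem M W) (ω : List B)
    (hnred : ¬ cs.IsReduced ω)
    (htail : cs.IsReduced ω.tail)
    (hdrop : cs.IsReduced ω.dropLast)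
    (u : ℕ) (hu0 : 0 < u) (hu1 : u + 1 < ω.length) :
    ¬ cs.IsReduced (ω.eraseIdx u) := by
  classical
  obtain ⟨i0, rest, rfl⟩ : ∃ i0 rest, ω = i0 :: rest := by
    cases ω with
    | nil => simp at hu1
    | cons a l => exact ⟨a, l, rfl⟩
  rcases rest.eq_nil_or_concat with rfl | ⟨mid, lst, rfl⟩
  · simp only [List.length_cons, List.length_nil] at hu1; omega
  simp only [List.concat_eq_append] at htail hdrop hnred hu1 ⊢
  rw [List.tail_cons] at htail
  have hdl : (i0 :: (mid ++ [lst])).dropLast = i0 :: mid := by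
    rw [← List.cons_append, List.dropLast_concat]
  rw [hdl] at hdrop
  set L := mid.length with hL
  have hu1' : u ≤ L := by simpa using Nat.lt_succ_iff.mp (by simpa using hu1)
  have hL1 : 1 ≤ L := le_trans hu0 hu1'
  set g := cs.wordProd (i0 :: (mid ++ [lst])) with hgdef
  set d := cs.wordProd (i0 :: mid) with hddef
  set t := d * cs.simple lst * d⁻¹ with htdef
  -- two decompositions of the inversion sequence
  have hlisω : cs.leftInvSeq (i0 :: (mid ++ [lst])) = cs.leftInvSeq (i0 :: mid) ++ [t] := by
    rw [show i0 :: (mid ++ [lst]) = (i0 :: mid).concat lst from by simp,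
      cs.leftInvSeq_concat, List.concat_eq_append, ← hddef, ← htdef]
  have hnotnodup : ¬ (cs.leftInvSeq (i0 :: (mid ++ [lst]))).Nodup :=
    fun h => hnred (isReduced_of_nodup_lis cs h)
  have ht_mem : t ∈ cs.leftInvSeq (i0 :: mid) := by
    by_contra hmem
    apply hnotnodup
    rw [hlisω, List.nodup_append]
    exact ⟨hdrop.nodup_leftInvSeq, List.nodup_singleton t, by simp; intro a ha h; exact hmem (h ▸ ha)⟩
  -- the duplicated inversion is the first simple reflection
  have ht : t = cs.simple i0 := by
    by_contra hne
    have hc1 : (cs.leftInvSeq (i0 :: (mid ++ [lst]))).count t = 2 := by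
      rw [hlisω, List.count_append]
      have h1 : (cs.leftInvSeq (i0 :: mid)).count t = 1 := by
        have h2 := List.nodup_iff_count_le_one.mp hdrop.nodup_leftInvSeq t
        have h3 := List.count_pos_iff.mpr ht_mem
        omega
      rw [h1]
      simp
    have hc2 : (cs.leftInvSeq (i0 :: (mid ++ [lst]))).count t ≤ 1 := by
      rw [leftInvSeq_cons, List.count_cons]
      have h4 : ¬ (cs.simple i0 = t) := fun h => hne h.symm
      have hx : t = MulAut.conj (cs.simple i0) (cs.simple i0 * t * cs.simple i0) := by
        simp [MulAut.conj_apply, cs.inv_simple, mul_assoc,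
          cs.simple_mul_simple_cancel_left, cs.simple_mul_simple_cancel_right]
      have h5 : (List.map (⇑(MulAut.conj (cs.simple i0)))
          (cs.leftInvSeq (mid ++ [lst]))).count t
          = (cs.leftInvSeq (mid ++ [lst])).count (cs.simple i0 * t * cs.simple i0) := by
        conv_lhs => rw [hx]
        exact List.count_map_of_injective _ _ (MulAut.conj (cs.simple i0)).injective _
      rw [h5]
      have h6 := List.nodup_iff_count_le_one.mp htail.nodup_leftInvSeq
        (cs.simple i0 * t * cs.simple i0)
      simp [h4]
      omega
    omega
  -- key identities
  have hgd : g = d * cs.simple lst := by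
    rw [hgdef, hddef, ← List.cons_append, cs.wordProd_append, cs.wordProd_singleton]
  have hsg : cs.simple i0 * g = d := by
    rw [← ht, htdef, hgd]
    have h7 : d * cs.simple lst * d⁻¹ * (d * cs.simple lst)
        = d * (cs.simple lst * cs.simple lst) := by group
    rw [h7, cs.simple_mul_simple_self, mul_one]
  have hgc : g * cs.simple lst = d := by
    rw [hgd, mul_assoc, cs.simple_mul_simple_self, mul_one]
  have hπmid : cs.wordProd mid = g := by
    have h8 : d = cs.simple i0 * cs.wordProd mid := by rw [hddef, cs.wordProd_cons]
    apply mul_left_cancel (a := cs.simple i0)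
    rw [hsg, h8]
  -- lengths
  have htail_len : cs.length (cs.wordProd (mid ++ [lst])) = L + 1 := by
    have h9 : cs.length (cs.wordProd (mid ++ [lst])) = (mid ++ [lst]).length := htail
    simpa using h9
  have hdrop_len : cs.length d = L + 1 := by
    have h9 : cs.length (cs.wordProd (i0 :: mid)) = (i0 :: mid).length := hdrop
    rw [hddef]
    simpa using h9
  have hlg : cs.length g = L := by
    have hle : cs.length g ≤ L := by
      rw [← hπmid]; simpa using cs.length_wordProd_le mid
    have h10 : g = cs.simple i0 * cs.wordProd (mid ++ [lst]) := by
      rw [hgdef, cs.wordProd_cons]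
    rcases cs.length_simple_mul (cs.wordProd (mid ++ [lst])) i0 with h11 | h11 <;>
      rw [← h10] at h11 <;> omega
  have hmidred : cs.IsReduced mid :=
    show cs.length (cs.wordProd mid) = mid.length by rw [hπmid, hlg]
  -- the reflection at position u - 1 of mid
  set m := u - 1 with hm
  have hmL : m < L := by omega
  set q := (cs.leftInvSeq mid).getD m 1 with hq
  have hq_mem : q ∈ cs.leftInvSeq mid := by
    have h12 : m < (cs.leftInvSeq mid).length := by rw [cs.length_leftInvSeq]; exact hmL
    rw [hq, List.getD_eq_getElem _ _ h12]
    exact List.getElem_mem _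
  have hq_ne : q ≠ cs.simple i0 := by
    intro hqe
    have h13 := (cs.isLeftInversion_of_mem_leftInvSeq hmidred hq_mem).2
    rw [hqe, hπmid, hsg] at h13
    omega
  -- second description of lis rest
  have hgsg : g * cs.simple lst * g⁻¹ = cs.simple i0 := by
    rw [hgc, ← hsg, mul_inv_cancel_right]
  have hlisrest : cs.leftInvSeq (mid ++ [lst]) = cs.leftInvSeq mid ++ [cs.simple i0] := by
    rw [show mid ++ [lst] = mid.concat lst from by simp, cs.leftInvSeq_concat,
      List.concat_eq_append, hπmid, hgsg]
  set q' := cs.simple i0 * q * cs.simple i0 with hq'def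
  have hq'_ne : q' ≠ cs.simple i0 := by
    intro h
    apply hq_ne
    have h14 := congrArg (fun z => cs.simple i0 * z * cs.simple i0) h
    simpa [hq'def, mul_assoc, cs.simple_mul_simple_cancel_left,
      cs.simple_mul_simple_cancel_right] using h14
  have hq'_count : (cs.leftInvSeq (i0 :: (mid ++ [lst]))).count q' = 1 := by
    rw [leftInvSeq_cons, hlisrest, List.map_append, List.count_cons]
    have h15 : ¬ (cs.simple i0 = q') := fun h => hq'_ne h.symm
    have h16 : MulAut.conj (cs.simple i0) q = q' := by
      simp [MulAut.conj_apply, cs.inv_simple, hq'def]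
    have h17 : (List.map (⇑(MulAut.conj (cs.simple i0))) (cs.leftInvSeq mid)).count q'
        = (cs.leftInvSeq mid).count q := by
      conv_lhs => rw [← h16]
      exact List.count_map_of_injective _ _ (MulAut.conj (cs.simple i0)).injective _
    have h18 : (cs.leftInvSeq mid).count q = 1 := by
      have h19 := List.nodup_iff_count_le_one.mp hmidred.nodup_leftInvSeq q
      have h20 := List.count_pos_iff.mpr hq_mem
      omega
    have h21 : MulAut.conj (cs.simple i0) (cs.simple i0) = cs.simple i0 := by
      simp [MulAut.conj_apply, cs.inv_simple, cs.simple_mul_simple_cancel_right]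
    rw [List.count_append, h17, h18]
    simp [h15, h21, List.count_eq_zero, hq'_ne]
  have hq'_mem : q' ∈ cs.leftInvSeq mid := by
    have h22 := count_lis_parity cs (show cs.wordProd (i0 :: (mid ++ [lst])) = cs.wordProd mid
      from by rw [hπmid, hgdef]) q'
    rw [hq'_count] at h22
    apply List.count_pos_iff.mp
    omega
  have hinv := (cs.isLeftInversion_of_mem_leftInvSeq hmidred hq'_mem).2
  rw [hπmid] at hinv
  -- compute the erased word and its product
  have hu' : u = m + 1 := by omega
  have heq : (i0 :: (mid ++ [lst])).eraseIdx u = i0 :: (mid.eraseIdx m ++ [lst]) := by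
    rw [hu', List.eraseIdx_cons_succ, List.eraseIdx_append_of_lt_length hmL]
  have hπerase : cs.wordProd ((i0 :: (mid ++ [lst])).eraseIdx u) = q' * g := by
    rw [heq, cs.wordProd_cons, show mid.eraseIdx m ++ [lst] = (mid.eraseIdx m).concat lst
      from by simp, cs.wordProd_concat]
    have h23 : cs.wordProd (mid.eraseIdx m) = q * cs.wordProd mid :=
      (cs.getD_leftInvSeq_mul_wordProd mid m).symm
    rw [h23, hπmid, mul_assoc q g, hgc, ← hsg, hq'def]
    group
  intro hred
  have hlen2 : cs.length (cs.wordProd ((i0 :: (mid ++ [lst])).eraseIdx u))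
      = ((i0 :: (mid ++ [lst])).eraseIdx u).length := hred
  rw [hπerase, heq] at hlen2
  have hlen3 : (i0 :: (mid.eraseIdx m ++ [lst])).length = L + 1 := by
    simp [List.length_eraseIdx, hmL]
    split_ifs <;> omega
  rw [hlen3] at hlen2
  omega
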